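/- If f(x,·) is symmetric in each coordinate of y, then Ψ_x(Au, v) = Ψ_x(u, v) for every diagonal matrix A with diagonal entries ±1, and consequently I_x(0⃗, 0) ≤ I_x(s, 0) for all s ∈ ℝ^q. -/

import Mathlib

open MeasureTheory Real ENNReal

theorem mpA (q : ℕ) (ε : Fin q → ℝ) (hε : ∀ j, ε j = 1 ∨ ε j = -1) :
    MeasurePreserving (fun y : EuclideanSpace ℝ (Fin q) =>
      (EuclideanSpace.equiv (Fin q) ℝ).symm fun j => ε j * y j) volume volume := by
  have e := EuclideanSpace.volume_preserving_symm_measurableEquiv_toLp (Fin q)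
  have hB : MeasurePreserving (fun (y : Fin q → ℝ) j => ε j * y j)
      (volume : Measure (Fin q → ℝ)) volume := by
    apply volume_preserving_pi
    intro i
    rcases hε i with h | h <;> simp only [h]
    · have : (fun t : ℝ => (1:ℝ) * t) = id := by funext t; simp
      rw [show (HMul.hMul (1:ℝ)) = (fun t : ℝ => (1:ℝ) * t) from rfl, this]
      exact MeasurePreserving.id _
    · have : (fun t : ℝ => (-1:ℝ) * t) = (fun t : ℝ => -t) := by funext t; ring_nf
      rw [show (HMul.hMul (-1:ℝ)) = (fun t : ℝ => (-1:ℝ) * t) from rfl, this]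
      exact Measure.measurePreserving_neg _
  exact ((e.symm _).comp hB).comp e

/-- sign-flip as a measurable equiv -/
noncomputable def sgnEquiv (q : ℕ) (ε : Fin q → ℝ) (hε : ∀ j, ε j = 1 ∨ ε j = -1) :
    EuclideanSpace ℝ (Fin q) ≃ᵐ EuclideanSpace ℝ (Fin q) where
  toFun y := (EuclideanSpace.equiv (Fin q) ℝ).symm fun j => ε j * y j
  invFun y := (EuclideanSpace.equiv (Fin q) ℝ).symm fun j => ε j * y j
  left_inv y := by
    apply (EuclideanSpace.equiv (Fin q) ℝ).injective
    funext j
    have : ε j * ε j = 1 := by rcases hε j with h | h <;> rw [h] <;> norm_num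
    simp [← mul_assoc, this]
  right_inv y := by
    apply (EuclideanSpace.equiv (Fin q) ℝ).injective
    funext j
    have : ε j * ε j = 1 := by rcases hε j with h | h <;> rw [h] <;> norm_num
    simp [← mul_assoc, this]
  measurable_toFun := (mpA q ε hε).measurable
  measurable_invFun := (mpA q ε hε).measurable

theorem stmt8 (d q : ℕ)
    (K : EuclideanSpace ℝ (Fin d) → ℝ)
    (f : EuclideanSpace ℝ (Fin d) → EuclideanSpace ℝ (Fin q) → ℝ)
    (x : EuclideanSpace ℝ (Fin d))
    (hKmeas : Measurable K) (hKbdd : ∃ M : ℝ, ∀ z, |K z| ≤ M)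
    (hKint : Integrable K)
    (hfmeas : Measurable (f x)) (hfnn : ∀ y, 0 ≤ f x y)
    (hfprob : ∫ y, f x y = 1)
    (hmom : ∀ (m ρ : ℝ), 0 ≤ m → 0 ≤ ρ →
      Integrable (fun y : EuclideanSpace ℝ (Fin q) =>
        ‖y‖ ^ m * Real.exp (ρ * ‖y‖) * f x y))
    (hint : ∀ (u : EuclideanSpace ℝ (Fin q)) (v : ℝ),
      Integrable (fun p : EuclideanSpace ℝ (Fin d) × EuclideanSpace ℝ (Fin q) =>
        (Real.exp (((inner ℝ u p.2 : ℝ) + v) * K p.1) - 1) * f x p.2))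
    (hsym : ∀ ε : Fin q → ℝ, (∀ j, ε j = 1 ∨ ε j = -1) →
      ∀ y : EuclideanSpace ℝ (Fin q),
        f x ((EuclideanSpace.equiv (Fin q) ℝ).symm fun j => ε j * y j) = f x y) :
    (∀ ε : Fin q → ℝ, (∀ j, ε j = 1 ∨ ε j = -1) →
      ∀ (u : EuclideanSpace ℝ (Fin q)) (v : ℝ),
        (∫ p : EuclideanSpace ℝ (Fin d) × EuclideanSpace ℝ (Fin q),
          (Real.exp (((inner ℝ ((EuclideanSpace.equiv (Fin q) ℝ).symm fun j => ε j * u j)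
              p.2 : ℝ) + v) * K p.1) - 1) * f x p.2)
        = ∫ p : EuclideanSpace ℝ (Fin d) × EuclideanSpace ℝ (Fin q),
            (Real.exp (((inner ℝ u p.2 : ℝ) + v) * K p.1) - 1) * f x p.2)
    ∧ ∀ s : EuclideanSpace ℝ (Fin q),
      (⨆ w : EuclideanSpace ℝ (Fin q) × ℝ,
        ENNReal.ofReal ((inner ℝ w.1 (0 : EuclideanSpace ℝ (Fin q)) : ℝ) + w.2 * 0 -
          ∫ p : EuclideanSpace ℝ (Fin d) × EuclideanSpace ℝ (Fin q),
            (Real.exp (((inner ℝ w.1 p.2 : ℝ) + w.2) * K p.1) - 1) * f x p.2))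
      ≤ ⨆ w : EuclideanSpace ℝ (Fin q) × ℝ,
        ENNReal.ofReal ((inner ℝ w.1 s : ℝ) + w.2 * 0 -
          ∫ p : EuclideanSpace ℝ (Fin d) × EuclideanSpace ℝ (Fin q),
            (Real.exp (((inner ℝ w.1 p.2 : ℝ) + w.2) * K p.1) - 1) * f x p.2) := by
  have key : ∀ ε : Fin q → ℝ, (∀ j, ε j = 1 ∨ ε j = -1) →
      ∀ (u : EuclideanSpace ℝ (Fin q)) (v : ℝ),
        (∫ p : EuclideanSpace ℝ (Fin d) × EuclideanSpace ℝ (Fin q),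
          (Real.exp (((inner ℝ ((EuclideanSpace.equiv (Fin q) ℝ).symm fun j => ε j * u j)
              p.2 : ℝ) + v) * K p.1) - 1) * f x p.2)
        = ∫ p : EuclideanSpace ℝ (Fin d) × EuclideanSpace ℝ (Fin q),
            (Real.exp (((inner ℝ u p.2 : ℝ) + v) * K p.1) - 1) * f x p.2 := by
    intro ε hε u v
    set A := sgnEquiv q ε hε
    have hAmp : MeasurePreserving (fun y : EuclideanSpace ℝ (Fin q) => A y) volume volume :=
      mpA q ε hε
    set φ : (EuclideanSpace ℝ (Fin d) × EuclideanSpace ℝ (Fin q)) ≃ᵐ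
        (EuclideanSpace ℝ (Fin d) × EuclideanSpace ℝ (Fin q)) :=
      (MeasurableEquiv.refl (EuclideanSpace ℝ (Fin d))).prodCongr A with hφ
    have hφmp : MeasurePreserving (fun p => φ p)
        (volume : Measure (EuclideanSpace ℝ (Fin d) × EuclideanSpace ℝ (Fin q))) volume := by
      rw [show (volume : Measure (EuclideanSpace ℝ (Fin d) × EuclideanSpace ℝ (Fin q)))
        = (volume : Measure (EuclideanSpace ℝ (Fin d))).prod volume from rfl]
      exact (MeasurePreserving.id _).prod hAmp
    have hcomp := hφmp.integral_comp φ.measurableEmbedding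
      (fun p : EuclideanSpace ℝ (Fin d) × EuclideanSpace ℝ (Fin q) =>
        (Real.exp (((inner ℝ u p.2 : ℝ) + v) * K p.1) - 1) * f x p.2)
    rw [← hcomp]
    congr 1
    funext p
    have hA2 : (A p.2 : EuclideanSpace ℝ (Fin q)) =
        (EuclideanSpace.equiv (Fin q) ℝ).symm fun j => ε j * p.2 j := rfl
    have hinner : (inner ℝ u (A p.2) : ℝ)
        = (inner ℝ ((EuclideanSpace.equiv (Fin q) ℝ).symm fun j => ε j * u j) p.2 : ℝ) := by
      rw [hA2]
      simp only [PiLp.inner_apply, RCLike.inner_apply, conj_trivial]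
      apply Finset.sum_congr rfl
      intro j _
      show (ε j * p.2 j) * u j = p.2 j * (ε j * u j)
      ring
    have hf2 : f x (A p.2) = f x p.2 := by rw [hA2]; exact hsym ε hε p.2
    show (Real.exp (((inner ℝ ((EuclideanSpace.equiv (Fin q) ℝ).symm fun j => ε j * u j)
              p.2 : ℝ) + v) * K p.1) - 1) * f x p.2
        = (Real.exp (((inner ℝ u ((φ p).2) : ℝ) + v) * K ((φ p).1)) - 1) * f x ((φ p).2)
    have h1 : (φ p).1 = p.1 := rfl
    have h2 : (φ p).2 = A p.2 := rfl
    rw [h1, h2, hinner, hf2]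
  refine ⟨key, ?_⟩
  intro s
  apply iSup_le
  rintro ⟨u, v⟩
  by_cases h : 0 ≤ (inner ℝ u s : ℝ)
  · refine le_iSup_of_le (⟨u, v⟩ : EuclideanSpace ℝ (Fin q) × ℝ) ?_
    apply ENNReal.ofReal_le_ofReal
    simp only [inner_zero_right]
    linarith
  · set ε : Fin q → ℝ := fun _ => -1 with hεdef
    have hε : ∀ j, ε j = 1 ∨ ε j = -1 := fun j => Or.inr rfl
    set u' : EuclideanSpace ℝ (Fin q) :=
      (EuclideanSpace.equiv (Fin q) ℝ).symm fun j => ε j * u j with hu'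
    refine le_iSup_of_le (⟨u', v⟩ : EuclideanSpace ℝ (Fin q) × ℝ) ?_
    apply ENNReal.ofReal_le_ofReal
    have hΨ := key ε hε u v
    have hinner' : (inner ℝ u' s : ℝ) = -(inner ℝ u s : ℝ) := by
      simp only [hu', PiLp.inner_apply, RCLike.inner_apply, conj_trivial, ← Finset.sum_neg_distrib]
      apply Finset.sum_congr rfl
      intro j _
      show s j * ((-1:ℝ) * u j) = -(s j * u j)
      ring
    simp only [inner_zero_right]
    rw [hΨ, hinner']
    linarith
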